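/- arXiv:1210.7099 — 5 statements merged into one kernel-verified Lean document; each statement's English description precedes it below -/
import Mathlib

section
/- Let X and Y be real Banach spaces, T : X → Y a norm-one bounded linear operator, x' ∈ X' a norm-one functional, and y ∈ Y a nonzero vector. Then ‖T + x' ⊗ y‖ = 1 + ‖y‖ if and only if for every ε > 0 there exists x in the unit ball of X with ⟨x, x'⟩ ≥ 1 − ε and ‖T x + y/‖y‖‖ ≥ 2 − 2ε. -/
set_option maxHeartbeats 1000000


/-- characterisation of the Daugavet equation for a norm-one
operator `T` and a rank-one operator `x' ⊗ y`. -/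
theorem daugavet_eq_rank_one_iff
    {X Y : Type*} [NormedAddCommGroup X] [NormedSpace ℝ X] [CompleteSpace X]
    [NormedAddCommGroup Y] [NormedSpace ℝ Y] [CompleteSpace Y]
    (T : X →L[ℝ] Y) (hT : ‖T‖ = 1)
    (x' : X →L[ℝ] ℝ) (hx' : ‖x'‖ = 1)
    (y : Y) (hy : y ≠ 0) :
    ‖T + x'.smulRight y‖ = 1 + ‖y‖ ↔
      ∀ ε > (0 : ℝ), ∃ x : X, ‖x‖ ≤ 1 ∧ 1 - ε ≤ x' x ∧
        2 - 2 * ε ≤ ‖T x + ‖y‖⁻¹ • y‖ := by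
  have hy0 : (0:ℝ) < ‖y‖ := norm_pos_iff.mpr hy
  set e : Y := ‖y‖⁻¹ • y with he
  have hye : y = ‖y‖ • e := by rw [he, smul_smul, mul_inv_cancel₀ hy0.ne', one_smul]
  have hne : ‖e‖ = 1 := by
    rw [he, norm_smul, norm_inv, norm_norm, inv_mul_cancel₀ hy0.ne']
  set S := T + x'.smulRight y with hS
  have hSapp : ∀ x : X, S x = T x + (x' x) • y := by
    intro x
    simp [hS, ContinuousLinearMap.add_apply, ContinuousLinearMap.smulRight_apply]
  constructor
  · intro hnorm ε hε
    rcases le_or_gt 1 ε with h1 | h1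
    · refine ⟨0, by simp, by simp; linarith, ?_⟩
      simp only [map_zero, zero_add, hne]
      linarith
    · set δ : ℝ := ε * min ‖y‖ 1 with hδ
      have hδ0 : 0 < δ := mul_pos hε (lt_min hy0 one_pos)
      have hδy : δ ≤ ε * ‖y‖ := mul_le_mul_of_nonneg_left (min_le_left _ _) hε.le
      have hδ1 : δ ≤ ε := by
        calc δ ≤ ε * 1 := mul_le_mul_of_nonneg_left (min_le_right _ _) hε.le
          _ = ε := mul_one ε
      obtain ⟨x₀, hx₀, hSx₀⟩ := S.exists_lt_apply_of_lt_opNorm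
        (show ‖S‖ - δ < ‖S‖ by linarith)
      -- wlog sign
      obtain ⟨x, hx, ht0, hSx⟩ : ∃ x : X, ‖x‖ ≤ 1 ∧ 0 ≤ x' x ∧ 1 + ‖y‖ - δ < ‖S x‖ := by
        rcases le_or_gt 0 (x' x₀) with h | h
        · exact ⟨x₀, hx₀.le, h, by rwa [hnorm] at hSx₀⟩
        · refine ⟨-x₀, by simpa using hx₀.le, by simp; linarith, ?_⟩
          rw [map_neg, norm_neg]
          rwa [hnorm] at hSx₀
      set t : ℝ := x' x with htdef
      have ht1 : t ≤ 1 := by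
        calc t ≤ |x' x| := le_abs_self _
          _ = ‖x' x‖ := (Real.norm_eq_abs _).symm
          _ ≤ ‖x'‖ * ‖x‖ := x'.le_opNorm x
          _ = ‖x‖ := by rw [hx', one_mul]
          _ ≤ 1 := hx
      have hTx : ‖T x‖ ≤ 1 := by
        calc ‖T x‖ ≤ ‖T‖ * ‖x‖ := T.le_opNorm x
          _ = ‖x‖ := by rw [hT, one_mul]
          _ ≤ 1 := hx
      have hlow : 1 + ‖y‖ - δ < ‖T x‖ + t * ‖y‖ := by
        calc 1 + ‖y‖ - δ < ‖S x‖ := hSx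
          _ ≤ ‖T x‖ + ‖t • y‖ := by rw [hSapp x]; exact norm_add_le _ _
          _ = ‖T x‖ + t * ‖y‖ := by
              rw [norm_smul, Real.norm_of_nonneg ht0]
      have ht : 1 - ε ≤ t := by
        have h2 : (1 - ε) * ‖y‖ ≤ t * ‖y‖ := by nlinarith [mul_nonneg hε.le hy0.le]
        exact (mul_le_mul_iff_left₀ hy0).mp h2
      refine ⟨x, hx, ht, ?_⟩
      set s : ℝ := t * ‖y‖ with hsdef
      have hs0 : 0 < s := mul_pos (by linarith) hy0
      have hsy : s ≤ ‖y‖ := by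
        simpa using mul_le_of_le_one_left hy0.le ht1
      have hN : 1 + ‖y‖ - δ < ‖T x + s • e‖ := by
        have : S x = T x + s • e := by
          rw [hSapp x, hye, smul_smul]
        rwa [this] at hSx
      show 2 - 2 * ε ≤ ‖T x + e‖
      rcases le_or_gt s 1 with hs1 | hs1
      · have hid : T x + s • e = (1 - s) • (T x) + s • (T x + e) := by module
        have hub : ‖T x + s • e‖ ≤ (1 - s) * ‖T x‖ + s * ‖T x + e‖ := by
          rw [hid]
          calc ‖(1 - s) • (T x) + s • (T x + e)‖
              ≤ ‖(1 - s) • (T x)‖ + ‖s • (T x + e)‖ := norm_add_le _ _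
            _ = (1 - s) * ‖T x‖ + s * ‖T x + e‖ := by
                rw [norm_smul, norm_smul, Real.norm_of_nonneg (by linarith),
                  Real.norm_of_nonneg hs0.le]
        nlinarith [norm_nonneg (T x), mul_nonneg (by linarith : (0:ℝ) ≤ 1 - ε)
          (by linarith : (0:ℝ) ≤ ‖y‖ - s)]
      · have hid : T x + e = (T x + s • e) - (s - 1) • e := by module
        have hlb : ‖T x + s • e‖ - (s - 1) ≤ ‖T x + e‖ := by
          rw [hid]
          have := norm_sub_norm_le (T x + s • e) ((s - 1) • e)
          rw [norm_smul, Real.norm_of_nonneg (by linarith), hne, mul_one] at this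
          linarith
        linarith
  · intro H
    refine le_antisymm ?_ ?_
    · calc ‖S‖ ≤ ‖T‖ + ‖x'.smulRight y‖ := norm_add_le _ _
        _ = 1 + ‖y‖ := by
            rw [hT, ContinuousLinearMap.norm_smulRight_apply, hx', one_mul]
    · apply le_of_forall_pos_le_add
      intro c hc
      have hden : (0:ℝ) < 2 + 3 * ‖y‖ := by linarith
      set ε : ℝ := c / (2 + 3 * ‖y‖) with hεdef
      have hε : 0 < ε := div_pos hc hden
      obtain ⟨x, hx, ht, hf⟩ := H ε hε
      set t : ℝ := x' x with htdef
      have ht1 : t ≤ 1 := by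
        calc t ≤ |x' x| := le_abs_self _
          _ = ‖x' x‖ := (Real.norm_eq_abs _).symm
          _ ≤ ‖x'‖ * ‖x‖ := x'.le_opNorm x
          _ = ‖x‖ := by rw [hx', one_mul]
          _ ≤ 1 := hx
      have hTx : ‖T x‖ ≤ 1 := by
        calc ‖T x‖ ≤ ‖T‖ * ‖x‖ := T.le_opNorm x
          _ = ‖x‖ := by rw [hT, one_mul]
          _ ≤ 1 := hx
      set s : ℝ := t * ‖y‖ with hsdef
      have hs1 : (1 - ε) * ‖y‖ ≤ s := mul_le_mul_of_nonneg_right ht hy0.le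
      have hs2 : s ≤ ‖y‖ := by
        simpa using mul_le_of_le_one_left hy0.le ht1
      have hSx : S x = T x + s • e := by rw [hSapp x, hye, smul_smul]
      have hle : ‖T x + s • e‖ ≤ ‖S‖ := by
        rw [← hSx]; exact S.unit_le_opNorm x hx
      have key : 1 + ‖y‖ - ε * (2 + 3 * ‖y‖) ≤ ‖T x + s • e‖ := by
        rcases le_or_gt s 1 with hs | hs
        · have hid : T x + s • e = (T x + e) - (1 - s) • e := by module
          have hlb : ‖T x + e‖ - (1 - s) ≤ ‖T x + s • e‖ := by
            rw [hid]
            have := norm_sub_norm_le (T x + e) ((1 - s) • e)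
            rw [norm_smul, Real.norm_of_nonneg (by linarith), hne, mul_one] at this
            linarith
          nlinarith [mul_nonneg hε.le hy0.le]
        · have hss : s⁻¹ * s = 1 := inv_mul_cancel₀ (by linarith)
          have hid : T x + e = s⁻¹ • (T x + s • e) + (1 - s⁻¹) • (T x) := by
            rw [smul_add, smul_smul, hss, one_smul, sub_smul, one_smul]; abel
          have hsinv0 : (0:ℝ) < s⁻¹ := inv_pos.mpr (by linarith)
          have hsinv1 : s⁻¹ ≤ 1 := by
            rw [inv_le_one_iff₀]; right; linarith
          have hub : ‖T x + e‖ ≤ s⁻¹ * ‖T x + s • e‖ + (1 - s⁻¹) * ‖T x‖ := by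
            rw [hid]
            calc ‖s⁻¹ • (T x + s • e) + (1 - s⁻¹) • (T x)‖
                ≤ ‖s⁻¹ • (T x + s • e)‖ + ‖(1 - s⁻¹) • (T x)‖ := norm_add_le _ _
              _ = s⁻¹ * ‖T x + s • e‖ + (1 - s⁻¹) * ‖T x‖ := by
                  rw [norm_smul, norm_smul, Real.norm_of_nonneg hsinv0.le,
                    Real.norm_of_nonneg (by linarith)]
          -- multiply hub by s: s*f1 ≤ N + (s-1)*‖T x‖
          have hub2 : s * ‖T x + e‖ ≤ ‖T x + s • e‖ + (s - 1) * ‖T x‖ := by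
            have := mul_le_mul_of_nonneg_left hub (by linarith : (0:ℝ) ≤ s)
            have hss' : s * s⁻¹ = 1 := mul_inv_cancel₀ (by linarith)
            nlinarith [this]
          nlinarith [norm_nonneg (T x), mul_nonneg hε.le hy0.le,
            mul_nonneg (mul_nonneg hε.le hε.le) hy0.le,
            mul_nonneg hε.le hε.le, norm_nonneg (T x + e)]
      have hc' : ε * (2 + 3 * ‖y‖) = c := div_mul_cancel₀ c hden.ne'
      linarith
end

section
/- Let X, Y be real Banach spaces, T : X → Y a norm-one operator, W a set of norm-one functionals in X', and W·Y the set of rank-one operators x' ⊗ y with x' ∈ W and y ∈ Y. Then ‖T + R‖ = 1 + ‖R‖ for every R ∈ W·Y if and only if for every y in the unit sphere of Y, every x' ∈ W, and every ε > 0, there exists x in the unit ball of X with ⟨x, x'⟩ ≥ 1 − ε and ‖T x + y‖ ≥ 2 − 2ε. -/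
/-- `Y` has the `T`-Daugavet property with respect to the rank-one
operators `W · Y` iff a geometric slice condition holds. -/
theorem T_daugavet_wrt_WY_iff
    {X Y : Type*} [NormedAddCommGroup X] [NormedSpace ℝ X] [CompleteSpace X]
    [NormedAddCommGroup Y] [NormedSpace ℝ Y] [CompleteSpace Y]
    (T : X →L[ℝ] Y) (hT : ‖T‖ = 1)
    (W : Set (X →L[ℝ] ℝ)) (hW : ∀ x' ∈ W, ‖x'‖ = 1) :
    (∀ x' ∈ W, ∀ y : Y, ‖T + x'.smulRight y‖ = 1 + ‖x'.smulRight y‖) ↔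
      ∀ y : Y, ‖y‖ = 1 → ∀ x' ∈ W, ∀ ε > (0 : ℝ),
        ∃ x : X, ‖x‖ ≤ 1 ∧ 1 - ε ≤ x' x ∧ 2 - 2 * ε ≤ ‖T x + y‖ := by
  constructor
  · intro h y hy x' hx' ε hε
    have hx'1 : ‖x'‖ = 1 := hW x' hx'
    have hR : ‖x'.smulRight y‖ = 1 := by
      rw [ContinuousLinearMap.norm_smulRight_apply, hx'1, hy, one_mul]
    have h2 : ‖T + x'.smulRight y‖ = 2 := by rw [h x' hx' y, hR]; norm_num
    obtain ⟨x, hx1, hx2⟩ := (T + x'.smulRight y).exists_lt_apply_of_lt_opNorm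
      (r := 2 - ε) (by rw [h2]; linarith)
    have key : ∀ z : X, ‖z‖ ≤ 1 → 0 ≤ x' z → 2 - ε < ‖T z + x' z • y‖ →
        ∃ x : X, ‖x‖ ≤ 1 ∧ 1 - ε ≤ x' x ∧ 2 - 2 * ε ≤ ‖T x + y‖ := by
      intro z hz hzc hzn
      have hTz : ‖T z‖ ≤ 1 := by
        calc ‖T z‖ ≤ ‖T‖ * ‖z‖ := T.le_opNorm z
        _ ≤ 1 := by rw [hT]; linarith
      have hc1 : x' z ≤ 1 := by
        have := x'.le_opNorm z
        rw [hx'1, one_mul] at this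
        exact le_trans (le_abs_self _) (this.trans hz)
      have hcy : ‖x' z • y‖ = x' z := by
        rw [norm_smul, hy, mul_one, Real.norm_eq_abs, abs_of_nonneg hzc]
      have hclb : 1 - ε ≤ x' z := by
        have := norm_add_le (T z) (x' z • y)
        rw [hcy] at this
        linarith
      refine ⟨z, hz, hclb, ?_⟩
      have heq : T z + x' z • y = (T z + y) + (x' z • y - y) := by abel
      have hdn : ‖x' z • y - y‖ = 1 - x' z := by
        rw [show x' z • y - y = (x' z - 1) • y by rw [sub_smul, one_smul],
          norm_smul, hy, mul_one, Real.norm_eq_abs, abs_of_nonpos (by linarith)]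
        ring
      have := norm_add_le (T z + y) (x' z • y - y)
      rw [← heq, hdn] at this
      linarith
    have happ : (T + x'.smulRight y) x = T x + x' x • y := by
      simp [ContinuousLinearMap.add_apply, ContinuousLinearMap.smulRight_apply]
    rcases le_or_gt 0 (x' x) with hc | hc
    · exact key x hx1.le hc (by rwa [happ] at hx2)
    · refine key (-x) (by rw [norm_neg]; exact hx1.le) (by simp; linarith) ?_
      have : T (-x) + x' (-x) • y = -((T + x'.smulRight y) x) := by
        simp [ContinuousLinearMap.add_apply, ContinuousLinearMap.smulRight_apply]
        abel
      rw [this, norm_neg]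
      exact hx2
  · intro h x' hx' y
    have hx'1 : ‖x'‖ = 1 := hW x' hx'
    by_cases hy0 : y = 0
    · have h0 : x'.smulRight (0:Y) = 0 := by ext z; simp
      simp [hy0, h0, hT]
    have hR : ‖x'.smulRight y‖ = ‖y‖ := by
      rw [ContinuousLinearMap.norm_smulRight_apply, hx'1, one_mul]
    have hub : ‖T + x'.smulRight y‖ ≤ 1 + ‖x'.smulRight y‖ := by
      calc ‖T + x'.smulRight y‖ ≤ ‖T‖ + ‖x'.smulRight y‖ := norm_add_le _ _
        _ = 1 + ‖x'.smulRight y‖ := by rw [hT]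
    refine le_antisymm hub ?_
    rw [hR]
    refine le_of_forall_pos_le_add ?_
    intro δ hδ
    set ε : ℝ := min (δ / (2 + 3 * ‖y‖)) (1/2) with hεdef
    have hyn : (0:ℝ) < ‖y‖ := norm_pos_iff.mpr hy0
    have hεpos : 0 < ε := lt_min (div_pos hδ (by linarith)) (by norm_num)
    have hεhalf : ε ≤ 1/2 := min_le_right _ _
    have hεδ : ε * (2 + 3 * ‖y‖) ≤ δ := by
      rw [← le_div_iff₀ (by linarith : (0:ℝ) < 2 + 3 * ‖y‖)]
      exact min_le_left _ _
    set yh : Y := ‖y‖⁻¹ • y with hyhdef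
    have hyh : ‖yh‖ = 1 := norm_smul_inv_norm hy0
    obtain ⟨x, hx1, hx2, hx3⟩ := h yh hyh x' hx' ε hεpos
    have hne : T x + yh ≠ 0 := by
      intro h0
      rw [h0, norm_zero] at hx3
      linarith
    obtain ⟨f, hf1, hf2⟩ := exists_dual_vector ℝ (T x + yh) (norm_ne_zero_iff.mpr hne)
    have hfTx : f (T x) ≤ 1 := by
      calc f (T x) ≤ ‖f (T x)‖ := le_abs_self _
      _ ≤ ‖f‖ * ‖T x‖ := f.le_opNorm _
      _ ≤ 1 * (‖T‖ * ‖x‖) := by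
          rw [hf1]; exact mul_le_mul_of_nonneg_left (T.le_opNorm x) zero_le_one
      _ ≤ 1 := by rw [hT]; linarith
    have hfyh1 : f yh ≤ 1 := by
      calc f yh ≤ ‖f yh‖ := le_abs_self _
      _ ≤ ‖f‖ * ‖yh‖ := f.le_opNorm _
      _ = 1 := by rw [hf1, hyh, one_mul]
    have hsum : f (T x) + f yh = ‖T x + yh‖ := by
      have h' := hf2
      rw [map_add] at h'
      exact_mod_cast h'
    have hfTxlb : 1 - 2 * ε ≤ f (T x) := by linarith
    have hfyhlb : 1 - 2 * ε ≤ f yh := by linarith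
    have hxc1 : x' x ≤ 1 := by
      have := x'.le_opNorm x
      rw [hx'1, one_mul] at this
      exact le_trans (le_abs_self _) (this.trans hx1)
    have hfy : f y = ‖y‖ * f yh := by
      rw [hyhdef, map_smul, smul_eq_mul, ← mul_assoc, mul_inv_cancel₀ hyn.ne', one_mul]
    have happ : f ((T + x'.smulRight y) x) = f (T x) + x' x * (‖y‖ * f yh) := by
      simp [ContinuousLinearMap.add_apply, ContinuousLinearMap.smulRight_apply, hfy]
    have hchain : f ((T + x'.smulRight y) x) ≤ ‖T + x'.smulRight y‖ := by
      calc f ((T + x'.smulRight y) x) ≤ ‖f ((T + x'.smulRight y) x)‖ := le_abs_self _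
      _ ≤ ‖f‖ * ‖(T + x'.smulRight y) x‖ := f.le_opNorm _
      _ ≤ 1 * (‖T + x'.smulRight y‖ * ‖x‖) := by
          rw [hf1]
          exact mul_le_mul_of_nonneg_left ((T + x'.smulRight y).le_opNorm x) zero_le_one
      _ ≤ ‖T + x'.smulRight y‖ := by
          rw [one_mul]
          exact mul_le_of_le_one_right (norm_nonneg _) hx1
    rw [happ] at hchain
    have hfyh0 : 0 ≤ f yh := by linarith
    have hx0 : 0 ≤ x' x := by linarith
    have ha : (1 - ε) * (‖y‖ * (1 - 2 * ε)) ≤ (1 - ε) * (‖y‖ * f yh) :=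
      mul_le_mul_of_nonneg_left (mul_le_mul_of_nonneg_left hfyhlb hyn.le)
        (by linarith : (0:ℝ) ≤ 1 - ε)
    have hb : (1 - ε) * (‖y‖ * f yh) ≤ x' x * (‖y‖ * f yh) :=
      mul_le_mul_of_nonneg_right hx2 (mul_nonneg hyn.le hfyh0)
    nlinarith [hchain, hfTxlb, hεδ, hεhalf, hεpos, hyn, ha, hb,
      mul_nonneg (mul_nonneg hεpos.le hεpos.le) hyn.le]
end

section
/- Define T, R : L¹[0,1] ⊕₁ L¹[1,2] → L¹[0,1] by T(f, g) = f and R(f, g) = (∫₁² g dx)·h₀, where h₀ is a fixed norm-one function in L¹[0,1]. Then ‖T‖ = ‖R‖ = 1 but ‖T + R‖ ≤ 1. -/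
open MeasureTheory

/-- with `T(f,g) = f` and `R(f,g) = (∫₁² g) · h₀` on
`L¹[0,1] ⊕₁ L¹[1,2]`, one has `‖T‖ = ‖R‖ = 1` but `‖T + R‖ ≤ 1`, so the
Daugavet equation fails. -/
theorem daugavet_fails_without_slice_continuity
    (h₀ : Lp ℝ 1 (volume.restrict (Set.Icc (0:ℝ) 1))) (hh₀ : ‖h₀‖ = 1)
    (T R : WithLp 1 (Lp ℝ 1 (volume.restrict (Set.Icc (0:ℝ) 1)) ×
        Lp ℝ 1 (volume.restrict (Set.Icc (1:ℝ) 2))) →L[ℝ]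
        Lp ℝ 1 (volume.restrict (Set.Icc (0:ℝ) 1)))
    (hT : ∀ p, T p = (WithLp.equiv 1 _ p).1)
    (hR : ∀ p, R p =
      (∫ x, ((WithLp.equiv 1 _ p).2 : ℝ → ℝ) x
          ∂(volume.restrict (Set.Icc (1:ℝ) 2))) • h₀) :
    ‖T‖ = 1 ∧ ‖R‖ = 1 ∧ ‖T + R‖ ≤ 1 := by
  have hnorm : ∀ p : WithLp 1 (Lp ℝ 1 (volume.restrict (Set.Icc (0:ℝ) 1)) ×
      Lp ℝ 1 (volume.restrict (Set.Icc (1:ℝ) 2))), ‖p‖ = ‖p.fst‖ + ‖p.snd‖ := by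
    intro p
    rw [WithLp.prod_norm_eq_add (by norm_num)]
    norm_num
  have hint : ∀ g : Lp ℝ 1 (volume.restrict (Set.Icc (1:ℝ) 2)),
      |∫ x, (g : ℝ → ℝ) x ∂(volume.restrict (Set.Icc (1:ℝ) 2))| ≤ ‖g‖ := by
    intro g
    rw [← L1.integral_eq_integral]
    exact L1.norm_integral_le g
  have hμuniv : (volume.restrict (Set.Icc (1:ℝ) 2)) Set.univ = 1 := by
    rw [Measure.restrict_apply_univ]
    rw [Real.volume_Icc]
    norm_num
  have hμuniv' : (volume.restrict (Set.Icc (1:ℝ) 2)) Set.univ ≠ ⊤ := by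
    rw [hμuniv]; exact ENNReal.one_ne_top
  set g₀ : Lp ℝ 1 (volume.restrict (Set.Icc (1:ℝ) 2)) :=
    indicatorConstLp 1 MeasurableSet.univ hμuniv' (1:ℝ) with hg₀
  have hg₀norm : ‖g₀‖ = 1 := by
    rw [hg₀, norm_indicatorConstLp one_ne_zero ENNReal.one_ne_top, measureReal_def, hμuniv]
    norm_num
  have hg₀int : ∫ x, (g₀ : ℝ → ℝ) x ∂(volume.restrict (Set.Icc (1:ℝ) 2)) = 1 := by
    rw [hg₀, integral_indicatorConstLp MeasurableSet.univ hμuniv', measureReal_def, hμuniv]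
    norm_num
  have hTle : ‖T‖ ≤ 1 := by
    refine ContinuousLinearMap.opNorm_le_bound _ zero_le_one fun p => ?_
    rw [hT p, one_mul, hnorm p]
    exact le_add_of_nonneg_right (norm_nonneg _)
  have hRle : ‖R‖ ≤ 1 := by
    refine ContinuousLinearMap.opNorm_le_bound _ zero_le_one fun p => ?_
    rw [hR p, one_mul, hnorm p, norm_smul, hh₀, mul_one, Real.norm_eq_abs]
    exact (hint _).trans (le_add_of_nonneg_left (norm_nonneg _))
  refine ⟨le_antisymm hTle ?_, le_antisymm hRle ?_, ?_⟩
  · set p := (WithLp.equiv 1 _).symm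
      (h₀, (0 : Lp ℝ 1 (volume.restrict (Set.Icc (1:ℝ) 2)))) with hp
    have h1 : ‖T p‖ = 1 := by rw [hT p]; simpa [hp] using hh₀
    have h2 : ‖p‖ = 1 := by rw [hnorm p]; simp [hp, hh₀]
    calc (1:ℝ) = ‖T p‖ := h1.symm
      _ ≤ ‖T‖ * ‖p‖ := T.le_opNorm p
      _ = ‖T‖ := by rw [h2, mul_one]
  · set p := (WithLp.equiv 1 _).symm
      ((0 : Lp ℝ 1 (volume.restrict (Set.Icc (0:ℝ) 1))), g₀) with hp
    have h1 : ‖R p‖ = 1 := by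
      rw [hR p]
      have h3 : (WithLp.equiv 1 _ p).2 = g₀ := rfl
      rw [h3, hg₀int, one_smul, hh₀]
    have h2 : ‖p‖ = 1 := by rw [hnorm p]; simp [hp, hg₀norm]
    calc (1:ℝ) = ‖R p‖ := h1.symm
      _ ≤ ‖R‖ * ‖p‖ := R.le_opNorm p
      _ = ‖R‖ := by rw [h2, mul_one]
  · refine ContinuousLinearMap.opNorm_le_bound _ zero_le_one fun p => ?_
    rw [ContinuousLinearMap.add_apply, hT p, hR p, one_mul, hnorm p]
    refine (norm_add_le _ _).trans ?_
    rw [norm_smul, hh₀, mul_one, Real.norm_eq_abs]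
    exact add_le_add le_rfl (hint _)
end

section
/- Let Y be a Banach space with the Daugavet property, T : X → Y an operator whose adjoint T' is an isometry onto its range, and R : X → Y a norm-one operator. Suppose that for every ε > 0 there exist a slice S₀ ∈ S_T of the unit ball of X and an element y in the unit sphere of Y such that R(S₀) ⊆ B_ε(y). Then ‖T + R‖ = 2. -/
/-- A Banach space has the Daugavet property if `‖Id + K‖ = 1 + ‖K‖` for every
rank-one operator `K = y' ⊗ y`. -/
def DaugavetProperty (Y : Type*) [NormedAddCommGroup Y] [NormedSpace ℝ Y] : Prop :=
  ∀ (y' : Y →L[ℝ] ℝ) (y : Y),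
    ‖ContinuousLinearMap.id ℝ Y + y'.smulRight y‖ = 1 + ‖y'.smulRight y‖

/-- The natural set of slices of the unit ball of `X` associated to an operator
`T : X → Y`: slices `S(T'y'/‖T'y'‖, ε)` for `y' ∈ Y'` with `T'y' ≠ 0`,
`0 < ε < 1`. -/
def opSlices {X Y : Type*} [NormedAddCommGroup X] [NormedSpace ℝ X]
    [NormedAddCommGroup Y] [NormedSpace ℝ Y] (T : X →L[ℝ] Y) : Set (Set X) :=
  {S | ∃ (y' : Y →L[ℝ] ℝ) (ε : ℝ), 0 < ε ∧ ε < 1 ∧ y'.comp T ≠ 0 ∧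
    S = {x | ‖x‖ ≤ 1 ∧ (1 - ε) * ‖y'.comp T‖ ≤ (y'.comp T) x}}

set_option maxHeartbeats 1000000 in
/-- if `Y` has the Daugavet property, `T'` is an isometry onto its
range, `‖R‖ = 1`, and for every `ε > 0` some slice of `S_T` is mapped by `R`
into an `ε`-ball around a unit vector, then `‖T + R‖ = 2`. -/
theorem daugavet_eq_of_slice_into_ball
    {X Y : Type*} [NormedAddCommGroup X] [NormedSpace ℝ X] [CompleteSpace X]
    [NormedAddCommGroup Y] [NormedSpace ℝ Y] [CompleteSpace Y]
    (hY : DaugavetProperty Y)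
    (T : X →L[ℝ] Y) (hT' : ∀ y' : Y →L[ℝ] ℝ, ‖y'.comp T‖ = ‖y'‖)
    (R : X →L[ℝ] Y) (hR : ‖R‖ = 1)
    (hsl : ∀ ε > (0 : ℝ), ∃ S₀ ∈ opSlices T, ∃ y : Y, ‖y‖ = 1 ∧
      ∀ x ∈ S₀, ‖R x - y‖ ≤ ε) :
    ‖T + R‖ = 2 := by
  -- Y is nontrivial
  have hRne : R ≠ 0 := by
    intro h; rw [h, norm_zero] at hR; norm_num at hR
  have hYnt : Nontrivial Y := by
    by_contra h
    rw [not_nontrivial_iff_subsingleton] at h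
    exact hRne (ContinuousLinearMap.ext fun x => Subsingleton.elim _ _)
  -- ‖T‖ ≤ 1
  have hTle : ‖T‖ ≤ 1 := by
    refine ContinuousLinearMap.opNorm_le_bound _ zero_le_one fun x => ?_
    obtain ⟨g, hg1, hgx⟩ := exists_dual_vector' ℝ (T x)
    have : ‖T x‖ = g (T x) := by exact_mod_cast hgx.symm
    calc ‖T x‖ = (g.comp T) x := by rw [this]; rfl
      _ ≤ ‖(g.comp T) x‖ := le_abs_self _
      _ ≤ ‖g.comp T‖ * ‖x‖ := (g.comp T).le_opNorm x
      _ = 1 * ‖x‖ := by rw [hT', hg1]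
  -- main estimate
  have key : ∀ δ > (0:ℝ), 2 - 3 * δ ≤ ‖T + R‖ := by
    intro δ hδ
    obtain ⟨S₀, ⟨y'₀, ε₀, hε₀, hε₀1, hne, hSeq⟩, y, hy, hball⟩ := hsl δ hδ
    have hy'₀ : y'₀ ≠ 0 := by
      intro h; apply hne; rw [h]; ext x; simp
    have hny : ‖y'₀‖ ≠ 0 := norm_ne_zero_iff.mpr hy'₀
    have hnypos : 0 < ‖y'₀‖ := norm_pos_iff.mpr hy'₀
    set θ := min δ (ε₀ / 3) with hθdef
    have hθpos : 0 < θ := lt_min hδ (by linarith)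
    have hθδ : θ ≤ δ := min_le_left _ _
    have hθε : θ ≤ ε₀ / 3 := min_le_right _ _
    have hθ1 : θ < 1 := lt_of_le_of_lt hθε (by linarith)
    set f : Y →L[ℝ] ℝ := ‖y'₀‖⁻¹ • y'₀ with hf
    have hfnorm : ‖f‖ = 1 := by
      rw [hf]
      have := norm_smul (‖y'₀‖⁻¹) y'₀
      rw [this, norm_inv, norm_norm, inv_mul_cancel₀ hny]
    have hK : ‖f.smulRight y‖ = 1 := by
      rw [ContinuousLinearMap.norm_smulRight_apply, hfnorm, hy, one_mul]
    have hId : ‖ContinuousLinearMap.id ℝ Y + f.smulRight y‖ = 2 := by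
      rw [hY f y, hK]; norm_num
    -- get z in the unit ball with ‖z + f z • y‖ large and f z ≥ 0
    obtain ⟨z₀, hz₀1, hz₀⟩ :=
      (ContinuousLinearMap.id ℝ Y + f.smulRight y).exists_lt_apply_of_lt_opNorm
        (r := 2 - θ / 2) (by rw [hId]; linarith)
    have hz₀' : 2 - θ / 2 < ‖z₀ + f z₀ • y‖ := by
      simpa [ContinuousLinearMap.add_apply] using hz₀
    obtain ⟨z, hz1, hz, hfz⟩ : ∃ z, ‖z‖ ≤ 1 ∧ 2 - θ / 2 < ‖z + f z • y‖ ∧ 0 ≤ f z := by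
      rcases le_or_gt 0 (f z₀) with h | h
      · exact ⟨z₀, le_of_lt hz₀1, hz₀', h⟩
      · refine ⟨-z₀, by rw [norm_neg]; exact le_of_lt hz₀1, ?_, by simp; linarith⟩
        have heq : (-z₀ : Y) + f (-z₀) • y = -(z₀ + f z₀ • y) := by
          rw [map_neg]; module
        rw [heq, norm_neg]; exact hz₀'
    set w := z + f z • y with hw
    have hwne : w ≠ 0 := by
      intro h; rw [h, norm_zero] at hz; linarith
    obtain ⟨y'', hy''1, hy''w⟩ := exists_dual_vector ℝ w (norm_ne_zero_iff.mpr hwne)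
    have hy''w' : y'' z + f z * y'' y = ‖w‖ := by
      have : y'' w = ‖w‖ := by exact_mod_cast hy''w
      rw [← this, hw, map_add, map_smul, smul_eq_mul]
    have h1 : 2 - θ / 2 < y'' z + f z * y'' y := by rw [hy''w']; exact hz
    -- basic bounds
    have hbnd : ∀ (g : Y →L[ℝ] ℝ) (v : Y), ‖g‖ = 1 → ‖v‖ ≤ 1 → g v ≤ 1 := by
      intro g v hg hv
      calc g v ≤ ‖g v‖ := le_abs_self _
        _ ≤ ‖g‖ * ‖v‖ := g.le_opNorm v
        _ ≤ 1 := by rw [hg]; linarith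
    have hz2 : y'' z ≤ 1 := hbnd y'' z hy''1 hz1
    have hy2 : y'' y ≤ 1 := hbnd y'' y hy''1 (le_of_eq hy)
    have hfz1 : f z ≤ 1 := hbnd f z hfnorm hz1
    have hmul1 : f z * y'' y ≤ f z := by
      calc f z * y'' y ≤ f z * 1 := mul_le_mul_of_nonneg_left hy2 hfz
        _ = f z := mul_one _
    have h2 : 1 - θ / 2 < y'' z := by linarith
    have h3 : 1 - θ / 2 < f z * y'' y := by linarith
    have hprod : 0 < f z * y'' y := by linarith
    have hfzpos : 0 < f z := by
      rcases hfz.lt_or_eq with h | h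
      · exact h
      · rw [← h, zero_mul] at hprod; linarith
    have hy''ypos : 0 < y'' y := by
      by_contra h
      push_neg at h
      have : f z * y'' y ≤ 0 := mul_nonpos_of_nonneg_of_nonpos hfz h
      linarith
    have hy''y : 1 - θ / 2 < y'' y := by
      have : f z * y'' y ≤ 1 * y'' y :=
        mul_le_mul_of_nonneg_right hfz1 (le_of_lt hy''ypos)
      rw [one_mul] at this; linarith
    have hfzlb : 1 - θ / 2 < f z := by linarith
    -- ‖f + y''‖ is large
    have hfy'' : 2 - θ < ‖f + y''‖ := by
      have happ : (f + y'') z = f z + y'' z := rfl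
      have : (f + y'') z ≤ ‖f + y''‖ := by
        calc (f + y'') z ≤ ‖(f + y'') z‖ := le_abs_self _
          _ ≤ ‖f + y''‖ * ‖z‖ := (f + y'').le_opNorm z
          _ ≤ ‖f + y''‖ * 1 := by
              exact mul_le_mul_of_nonneg_left hz1 (norm_nonneg _)
          _ = ‖f + y''‖ := mul_one _
      rw [happ] at this; linarith
    have hcompnorm : 2 - θ < ‖(f + y'').comp T‖ := by rw [hT']; exact hfy''
    obtain ⟨x₁, hx₁1, hx₁⟩ := ((f + y'').comp T).exists_lt_apply_of_lt_opNorm hcompnorm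
    have hx₁' : 2 - θ < |f (T x₁) + y'' (T x₁)| := by
      simpa [ContinuousLinearMap.comp_apply, ContinuousLinearMap.add_apply,
        Real.norm_eq_abs] using hx₁
    obtain ⟨x, hx1, hx⟩ : ∃ x, ‖x‖ ≤ 1 ∧ 2 - θ < f (T x) + y'' (T x) := by
      rcases abs_cases (f (T x₁) + y'' (T x₁)) with ⟨ha, _⟩ | ⟨ha, _⟩
      · exact ⟨x₁, le_of_lt hx₁1, by rw [← ha]; exact hx₁'⟩
      · refine ⟨-x₁, by rw [norm_neg]; exact le_of_lt hx₁1, ?_⟩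
        rw [map_neg, map_neg, map_neg]
        rw [ha] at hx₁'; linarith
    -- bounds for f(Tx), y''(Tx)
    have hbnd2 : ∀ g : Y →L[ℝ] ℝ, ‖g‖ = 1 → g (T x) ≤ 1 := by
      intro g hg
      calc g (T x) = (g.comp T) x := rfl
        _ ≤ ‖(g.comp T) x‖ := le_abs_self _
        _ ≤ ‖g.comp T‖ * ‖x‖ := (g.comp T).le_opNorm x
        _ ≤ 1 := by rw [hT', hg]; linarith
    have hfT : f (T x) ≤ 1 := hbnd2 f hfnorm
    have hy''T : y'' (T x) ≤ 1 := hbnd2 y'' hy''1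
    have hfTlb : 1 - θ < f (T x) := by linarith
    have hy''Tlb : 1 - θ < y'' (T x) := by linarith
    -- x ∈ S₀
    have hxS : x ∈ S₀ := by
      rw [hSeq]
      refine ⟨hx1, ?_⟩
      have hval : (y'₀.comp T) x = ‖y'₀‖ * f (T x) := by
        rw [hf]; simp [ContinuousLinearMap.comp_apply]
        field_simp
      rw [hval, hT']
      have h1e : 1 - ε₀ ≤ f (T x) := by linarith
      nlinarith
    have hRx : ‖R x - y‖ ≤ δ := hball x hxS
    -- conclude
    have hRest : -δ ≤ y'' (R x - y) := by
      have : |y'' (R x - y)| ≤ δ := by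
        calc |y'' (R x - y)| ≤ ‖y''‖ * ‖R x - y‖ := (y''.le_opNorm _)
          _ ≤ 1 * δ := by rw [hy''1]; exact mul_le_mul_of_nonneg_left hRx zero_le_one
          _ = δ := one_mul _
      linarith [neg_abs_le (y'' (R x - y))]
    have hfinal : 2 - 3 * δ ≤ y'' ((T + R) x) := by
      have : y'' ((T + R) x) = y'' (T x) + y'' y + y'' (R x - y) := by
        rw [ContinuousLinearMap.add_apply, map_add]
        have : y'' (R x) = y'' y + y'' (R x - y) := by
          rw [← map_add]; congr 1; abel
        rw [this]; ring
      rw [this]; linarith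
    have : y'' ((T + R) x) ≤ ‖T + R‖ := by
      calc y'' ((T + R) x) ≤ ‖y'' ((T + R) x)‖ := le_abs_self _
        _ ≤ ‖y''‖ * ‖(T + R) x‖ := y''.le_opNorm _
        _ = ‖(T + R) x‖ := by rw [hy''1, one_mul]
        _ ≤ ‖T + R‖ * ‖x‖ := (T + R).le_opNorm x
        _ ≤ ‖T + R‖ * 1 := mul_le_mul_of_nonneg_left hx1 (norm_nonneg _)
        _ = ‖T + R‖ := mul_one _
    linarith
  have hub : ‖T + R‖ ≤ 2 := by
    calc ‖T + R‖ ≤ ‖T‖ + ‖R‖ := norm_add_le T R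
      _ ≤ 2 := by rw [hR]; linarith
  have hlb : 2 ≤ ‖T + R‖ := by
    by_contra h
    push_neg at h
    have := key ((2 - ‖T + R‖) / 6) (by linarith)
    linarith
  linarith
end

section
/- Let Y be a Banach space with the Daugavet property, T : X → Y an operator whose adjoint is an isometry onto its range, and R : X → Y a norm-one weakly compact operator that is slice continuous with respect to T (i.e., every slice in S_R contains a slice in S_T). Then ‖T + R‖ = 2. -/
/-- An operator is weakly compact if the image of the closed unit ball is
relatively compact in the weak topology. -/
def WeaklyCompactOperator {X Y : Type*} [NormedAddCommGroup X] [NormedSpace ℝ X]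
    [NormedAddCommGroup Y] [NormedSpace ℝ Y] (R : X →L[ℝ] Y) : Prop :=
  IsCompact (closure ((⇑R '' {x | ‖x‖ ≤ 1}) : Set (WeakSpace ℝ Y)))


namespace DgAux

variable {X Y : Type*} [NormedAddCommGroup X] [NormedSpace ℝ X]
  [NormedAddCommGroup Y] [NormedSpace ℝ Y]

lemma exists_unit_norm_lt (A : X →L[ℝ] Y) {c : ℝ} (hc : 0 ≤ c) (h : c < ‖A‖) :
    ∃ x, ‖x‖ ≤ 1 ∧ c < ‖A x‖ := by
  by_contra hcon
  push_neg at hcon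
  have : ‖A‖ ≤ c := by
    refine A.opNorm_le_bound hc (fun x => ?_)
    rcases eq_or_ne x 0 with rfl | hx
    · simp [hc]
    · have h1 : ‖(‖x‖⁻¹ • x)‖ ≤ 1 := by
        rw [norm_smul, norm_inv, norm_norm]
        rw [inv_mul_cancel₀ (norm_ne_zero_iff.mpr hx)]
      have h2 := hcon _ h1
      rw [map_smul, norm_smul, norm_inv, norm_norm] at h2
      have hxpos : (0:ℝ) < ‖x‖ := norm_pos_iff.mpr hx
      calc ‖A x‖ = ‖x‖ * (‖x‖⁻¹ * ‖A x‖) := by field_simp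
        _ ≤ ‖x‖ * c := mul_le_mul_of_nonneg_left h2 (le_of_lt hxpos)
        _ = c * ‖x‖ := mul_comm _ _
  linarith

lemma exists_unit_apply_lt (f : X →L[ℝ] ℝ) {c : ℝ} (hc : 0 ≤ c) (h : c < ‖f‖) :
    ∃ x, ‖x‖ ≤ 1 ∧ c < f x := by
  obtain ⟨x, hx, hcx⟩ := exists_unit_norm_lt f hc h
  rcases le_or_gt 0 (f x) with hs | hs
  · exact ⟨x, hx, by rwa [Real.norm_eq_abs, abs_of_nonneg hs] at hcx⟩
  · refine ⟨-x, by simpa using hx, ?_⟩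
    rw [map_neg]
    rwa [Real.norm_eq_abs, abs_of_neg hs] at hcx

lemma dual_vector' {y : Y} (hy : y ≠ 0) : ∃ g : Y →L[ℝ] ℝ, ‖g‖ = 1 ∧ g y = ‖y‖ := by
  obtain ⟨g, hg1, hg2⟩ := exists_dual_vector ℝ y (norm_ne_zero_iff.mpr hy)
  exact ⟨g, hg1, by exact_mod_cast hg2⟩

/-- Daugavet point lemma: any slice of the unit ball of `Y` contains a point
almost diametral to any given unit vector `p`. -/
lemma daugavet_point (hY : DaugavetProperty Y) {F : Y →L[ℝ] ℝ} (hF : ‖F‖ = 1)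
    {p : Y} (hp : ‖p‖ = 1) {δ : ℝ} (hδ : 0 < δ) :
    ∃ z, ‖z‖ ≤ 1 ∧ 1 - δ ≤ F z ∧ 2 - δ ≤ ‖z + p‖ := by
  set K := F.smulRight p with hK
  have hKn : ‖K‖ = 1 := by rw [hK, ContinuousLinearMap.norm_smulRight_apply, hF, hp, one_mul]
  have hIdK : ‖ContinuousLinearMap.id ℝ Y + K‖ = 2 := by
    rw [hY F p, hKn]; norm_num
  have h2 : (2:ℝ) - δ/2 < ‖ContinuousLinearMap.id ℝ Y + K‖ := by
    rw [hIdK]; linarith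
  rcases le_or_gt 2 (δ/2) with hbig | hpos2
  ·
    refine ⟨0, by simp, by simp; linarith, by
      have : (0:ℝ) ≤ ‖(0:Y) + p‖ := norm_nonneg _
      linarith⟩
  · obtain ⟨w, hw, hwv⟩ := exists_unit_norm_lt (ContinuousLinearMap.id ℝ Y + K) (by linarith) h2
    have hwv' : 2 - δ/2 < ‖w + F w • p‖ := by
      simpa [hK, ContinuousLinearMap.add_apply, ContinuousLinearMap.smulRight_apply] using hwv
    have habs : 1 - δ/2 < |F w| := by
      have h3 : ‖w + F w • p‖ ≤ ‖w‖ + |F w| * ‖p‖ := by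
        calc ‖w + F w • p‖ ≤ ‖w‖ + ‖F w • p‖ := norm_add_le _ _
          _ = ‖w‖ + |F w| * ‖p‖ := by rw [norm_smul, Real.norm_eq_abs]
      rw [hp, mul_one] at h3
      linarith
    set s : ℝ := if 0 ≤ F w then 1 else -1 with hs
    have hsabs : s * F w = |F w| := by
      rcases le_or_gt 0 (F w) with h | h
      · simp [hs, h, abs_of_nonneg h]
      · simp [hs, not_le.mpr h, abs_of_neg h]
    have hsnorm : ‖s‖ = 1 := by
      rcases le_or_gt 0 (F w) with h | h
      · simp [hs, h]
      · simp [hs, not_le.mpr h]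
    refine ⟨s • w, ?_, ?_, ?_⟩
    · rw [norm_smul, hsnorm, one_mul]; exact hw
    · rw [map_smul]
      have : s • F w = |F w| := by simpa [smul_eq_mul] using hsabs
      rw [this]; linarith
    · have hz : F (s • w) = |F w| := by
        rw [map_smul]; simpa [smul_eq_mul] using hsabs
      have hkey : ‖s • w + F (s • w) • p‖ = ‖w + F w • p‖ := by
        have h1 : s • (w + F w • p) = s • w + F (s • w) • p := by
          rw [smul_add, smul_smul, hsabs, hz]
        rw [← h1, norm_smul, hsnorm, one_mul]
      have htri : ‖s • w + p‖ ≥ ‖s • w + F (s • w) • p‖ - ‖F (s • w) • p - p‖ := by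
        have := norm_sub_norm_le (s • w + F (s • w) • p) (F (s • w) • p - p)
        have heq : s • w + F (s • w) • p - (F (s • w) • p - p) = s • w + p := by abel
        rw [heq] at this
        linarith [this]
      have hnorm2 : ‖F (s • w) • p - p‖ ≤ δ/2 := by
        have : F (s • w) • p - p = (F (s • w) - 1) • p := by rw [sub_smul, one_smul]
        rw [this, norm_smul, hp, mul_one, Real.norm_eq_abs]
        have h4 : F (s • w) ≤ 1 := by
          calc F (s • w) ≤ |F (s • w)| := le_abs_self _
            _ ≤ ‖F‖ * ‖s • w‖ := by
                have := F.le_opNorm (s • w)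
                rwa [Real.norm_eq_abs] at this
            _ ≤ 1 := by
                rw [hF, one_mul, norm_smul, hsnorm, one_mul]; exact hw
        have h5 : 1 - δ/2 < F (s • w) := by rw [hz]; exact habs
        rw [abs_of_nonpos (by linarith)]
        linarith
      rw [hkey] at htri
      linarith


/-- The slice `{y ∈ B_Y : F y ≥ 1 - δ}`. -/
def Sl (F : Y →L[ℝ] ℝ) (δ : ℝ) : Set Y := {y | ‖y‖ ≤ 1 ∧ 1 - δ ≤ F y}

/-- Shrinking lemma: inside any slice there is a smaller slice, all of whose
points are almost diametral to a prescribed unit vector `p`. -/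
lemma shrink (hY : DaugavetProperty Y) {F : Y →L[ℝ] ℝ} (hF : ‖F‖ = 1)
    {p : Y} (hp : ‖p‖ = 1) {δ : ℝ} (hδ : 0 < δ) (hδ1 : δ ≤ 1) :
    ∃ (F' G : Y →L[ℝ] ℝ), ‖F'‖ = 1 ∧ ‖G‖ = 1 ∧ 1 - δ ≤ G p ∧
      (∀ y ∈ Sl F' (δ/16), y ∈ Sl F δ ∧ 1 - δ ≤ G y) := by
  obtain ⟨z, hz1, hz2, hz3⟩ := daugavet_point hY hF hp (by positivity : (0:ℝ) < δ/8)
  have hzp : z + p ≠ 0 := by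
    intro h0
    have : ‖z + p‖ = 0 := by rw [h0, norm_zero]
    have h15 : (15:ℝ)/8 ≤ ‖z + p‖ := by linarith
    linarith
  obtain ⟨G, hG1, hG2⟩ := dual_vector' hzp
  have hGz : 1 - δ/8 ≤ G z := by
    have hGp' : G p ≤ 1 := by
      calc G p ≤ |G p| := le_abs_self _
        _ ≤ ‖G‖ * ‖p‖ := by have := G.le_opNorm p; rwa [Real.norm_eq_abs] at this
        _ = 1 := by rw [hG1, hp, mul_one]
    have : G z = G (z + p) - G p := by rw [map_add]; ring
    rw [this, hG2]
    linarith
  have hGp : 1 - δ/8 ≤ G p := by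
    have hGz' : G z ≤ 1 := by
      calc G z ≤ |G z| := le_abs_self _
        _ ≤ ‖G‖ * ‖z‖ := by have := G.le_opNorm z; rwa [Real.norm_eq_abs] at this
        _ ≤ 1 := by rw [hG1, one_mul]; exact hz1
    have : G p = G (z + p) - G z := by rw [map_add]; ring
    rw [this, hG2]
    linarith
  set h : Y →L[ℝ] ℝ := F + G with hh
  have hhz : 2 - δ/4 ≤ h z := by
    have : h z = F z + G z := rfl
    rw [this]; linarith
  have hhn_ge : 2 - δ/4 ≤ ‖h‖ := by
    calc 2 - δ/4 ≤ h z := hhz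
      _ ≤ |h z| := le_abs_self _
      _ ≤ ‖h‖ * ‖z‖ := by have := h.le_opNorm z; rwa [Real.norm_eq_abs] at this
      _ ≤ ‖h‖ := by
          rcases le_or_gt ‖z‖ 1 with h1 | h1
          · nlinarith [norm_nonneg h, norm_nonneg z]
          · linarith [hz1]
  have hhn_le : ‖h‖ ≤ 2 := by
    calc ‖h‖ ≤ ‖F‖ + ‖G‖ := norm_add_le _ _
      _ = 2 := by rw [hF, hG1]; norm_num
  have hhne : h ≠ 0 := by
    intro h0
    rw [h0, norm_zero] at hhn_ge
    linarith
  have hhnpos : (0:ℝ) < ‖h‖ := by linarith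
  refine ⟨‖h‖⁻¹ • h, G, ?_, hG1, by linarith, ?_⟩
  · have := norm_smul_inv_norm (𝕜 := ℝ) (E := Y →L[ℝ] ℝ) hhne
    simpa using this
  · rintro y ⟨hy1, hy2⟩
    have hy2' : (1 - δ/16) * ‖h‖ ≤ h y := by
      have : (‖h‖⁻¹ • h) y = ‖h‖⁻¹ * h y := rfl
      rw [this] at hy2
      have := mul_le_mul_of_nonneg_left hy2 (le_of_lt hhnpos)
      calc (1 - δ/16) * ‖h‖ = ‖h‖ * (1 - δ/16) := mul_comm _ _
        _ ≤ ‖h‖ * (‖h‖⁻¹ * h y) := this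
        _ = h y := by field_simp
    have hhy : 2 - (3*δ)/8 ≤ h y := by
      have e1 : (1 - δ/16) * (2 - δ/4) ≤ (1 - δ/16) * ‖h‖ := by
        apply mul_le_mul_of_nonneg_left hhn_ge
        linarith
      nlinarith
    have hFy : F y ≤ 1 := by
      calc F y ≤ |F y| := le_abs_self _
        _ ≤ ‖F‖ * ‖y‖ := by have := F.le_opNorm y; rwa [Real.norm_eq_abs] at this
        _ ≤ 1 := by rw [hF, one_mul]; exact hy1
    have hGy : G y ≤ 1 := by
      calc G y ≤ |G y| := le_abs_self _
        _ ≤ ‖G‖ * ‖y‖ := by have := G.le_opNorm y; rwa [Real.norm_eq_abs] at this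
        _ ≤ 1 := by rw [hG1, one_mul]; exact hy1
    have hhy' : h y = F y + G y := rfl
    constructor
    · exact ⟨hy1, by rw [hhy'] at hhy; linarith⟩
    · rw [hhy'] at hhy; linarith


noncomputable section Machine

open Classical in
/-- Pullback of a slice of `B_Y` through `T`. -/
def Pull (T : X →L[ℝ] Y) (F : Y →L[ℝ] ℝ) (δ : ℝ) : Set X := {x | ‖x‖ ≤ 1 ∧ 1 - δ ≤ F (T x)}

open Classical in
def pickx (T : X →L[ℝ] Y) (F : Y →L[ℝ] ℝ) (δ : ℝ) : X :=
  if h : ∃ x, x ∈ Pull T F δ then h.choose else 0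

/-- Uniform average of the `R`-images of entries of `xs` indexed by `l`. -/
def avg (R : X →L[ℝ] Y) (xs : List X) (l : List ℕ) : Y :=
  (l.length : ℝ)⁻¹ • (l.map (fun i => R (xs.getD i 0))).sum

open Classical in
/-- The target convex combination handled at the current stage. -/
def tgt (R : X →L[ℝ] Y) (σ : ℕ → List ℕ) (yu : Y) (s : (Y →L[ℝ] ℝ) × ℝ × List X) : Y :=
  if (σ (Nat.unpair s.2.2.length).2 ≠ [] ∧
      ∀ i ∈ σ (Nat.unpair s.2.2.length).2, i < s.2.2.length)
  then avg R s.2.2 (σ (Nat.unpair s.2.2.length).2) else yu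

open Classical in
def pvec (R : X →L[ℝ] Y) (σ : ℕ → List ℕ) (yu : Y) (s : (Y →L[ℝ] ℝ) × ℝ × List X) : Y :=
  if tgt R σ yu s = 0 then yu else ‖tgt R σ yu s‖⁻¹ • tgt R σ yu s

def Good (T : X →L[ℝ] Y) (A : Set X) (s : (Y →L[ℝ] ℝ) × ℝ × List X) : Prop :=
  ‖s.1‖ = 1 ∧ 0 < s.2.1 ∧ s.2.1 ≤ 1 ∧ Pull T s.1 s.2.1 ⊆ A

def Cert (T R : X →L[ℝ] Y) (σ : ℕ → List ℕ) (yu : Y)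
    (s t : (Y →L[ℝ] ℝ) × ℝ × List X) : Prop :=
  (∀ y ∈ Sl t.1 t.2.1, y ∈ Sl s.1 s.2.1) ∧ t.2.1 ≤ s.2.1 ∧
  t.2.2 = s.2.2 ++ [pickx T s.1 s.2.1] ∧
  ∃ G : Y →L[ℝ] ℝ, ‖G‖ = 1 ∧ 1 - s.2.1 ≤ G (pvec R σ yu s) ∧
    ∀ y ∈ Sl t.1 t.2.1, 1 - s.2.1 ≤ G y

lemma pull_nonempty (T : X →L[ℝ] Y) (hT' : ∀ y' : Y →L[ℝ] ℝ, ‖y'.comp T‖ = ‖y'‖)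
    {F : Y →L[ℝ] ℝ} (hF : ‖F‖ = 1) {δ : ℝ} (hδ : 0 < δ) (hδ1 : δ ≤ 1) :
    ∃ x, x ∈ Pull T F δ := by
  have hn : ‖F.comp T‖ = 1 := by rw [hT', hF]
  obtain ⟨x, hx1, hx2⟩ := exists_unit_apply_lt (F.comp T) (c := 1 - δ) (by linarith)
    (by rw [hn]; linarith)
  exact ⟨x, hx1, le_of_lt (by simpa using hx2)⟩

lemma pickx_mem (T : X →L[ℝ] Y) (hT' : ∀ y' : Y →L[ℝ] ℝ, ‖y'.comp T‖ = ‖y'‖)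
    {F : Y →L[ℝ] ℝ} (hF : ‖F‖ = 1) {δ : ℝ} (hδ : 0 < δ) (hδ1 : δ ≤ 1) :
    pickx T F δ ∈ Pull T F δ := by
  rw [pickx, dif_pos (pull_nonempty T hT' hF hδ hδ1)]
  exact (pull_nonempty T hT' hF hδ hδ1).choose_spec

lemma pvec_norm (R : X →L[ℝ] Y) (σ : ℕ → List ℕ) {yu : Y} (hyu : ‖yu‖ = 1)
    (s : (Y →L[ℝ] ℝ) × ℝ × List X) : ‖pvec R σ yu s‖ = 1 := by
  rw [pvec]
  split_ifs with h
  · exact hyu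
  · exact norm_smul_inv_norm (𝕜 := ℝ) h

lemma step_ex (hY : DaugavetProperty Y) (T R : X →L[ℝ] Y)
    (hT' : ∀ y' : Y →L[ℝ] ℝ, ‖y'.comp T‖ = ‖y'‖) (hTn : ∀ x, ‖T x‖ ≤ ‖x‖)
    (σ : ℕ → List ℕ) {yu : Y} (hyu : ‖yu‖ = 1) (A : Set X) :
    ∀ s, Good T A s → ∃ t, Good T A t ∧ Cert T R σ yu s t := by
  rintro ⟨F, δ, xs⟩ ⟨h1, h2, h3, h4⟩
  obtain ⟨F', G, hF'1, hG1, hGp, hsl⟩ :=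
    shrink hY h1 (pvec_norm R σ hyu (F, δ, xs)) h2 h3
  refine ⟨(F', δ/16, xs ++ [pickx T F δ]), ⟨hF'1, by linarith, by linarith, ?_⟩,
    ⟨fun y hy => (hsl y hy).1, by linarith, rfl, G, hG1, hGp, fun y hy => (hsl y hy).2⟩⟩
  rintro x ⟨hx1, hx2⟩
  refine h4 ?_
  have hTx : ‖T x‖ ≤ 1 := le_trans (hTn x) hx1
  have := (hsl (T x) ⟨hTx, hx2⟩).1
  exact ⟨hx1, this.2⟩

def nxt (hY : DaugavetProperty Y) (T R : X →L[ℝ] Y)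
    (hT' : ∀ y' : Y →L[ℝ] ℝ, ‖y'.comp T‖ = ‖y'‖) (hTn : ∀ x, ‖T x‖ ≤ ‖x‖)
    (σ : ℕ → List ℕ) {yu : Y} (hyu : ‖yu‖ = 1) (A : Set X)
    (s : {s : (Y →L[ℝ] ℝ) × ℝ × List X // Good T A s}) :
    {t : (Y →L[ℝ] ℝ) × ℝ × List X // Good T A t} :=
  ⟨(step_ex hY T R hT' hTn σ hyu A s.1 s.2).choose,
   (step_ex hY T R hT' hTn σ hyu A s.1 s.2).choose_spec.1⟩

def sta (hY : DaugavetProperty Y) (T R : X →L[ℝ] Y)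
    (hT' : ∀ y' : Y →L[ℝ] ℝ, ‖y'.comp T‖ = ‖y'‖) (hTn : ∀ x, ‖T x‖ ≤ ‖x‖)
    (σ : ℕ → List ℕ) {yu : Y} (hyu : ‖yu‖ = 1) (A : Set X)
    (s₀ : {s : (Y →L[ℝ] ℝ) × ℝ × List X // Good T A s}) :
    ℕ → {s : (Y →L[ℝ] ℝ) × ℝ × List X // Good T A s} :=
  fun n => Nat.rec s₀ (fun _ s => nxt hY T R hT' hTn σ hyu A s) n

lemma sta_cert (hY : DaugavetProperty Y) (T R : X →L[ℝ] Y)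
    (hT' : ∀ y' : Y →L[ℝ] ℝ, ‖y'.comp T‖ = ‖y'‖) (hTn : ∀ x, ‖T x‖ ≤ ‖x‖)
    (σ : ℕ → List ℕ) {yu : Y} (hyu : ‖yu‖ = 1) (A : Set X)
    (s₀ : {s : (Y →L[ℝ] ℝ) × ℝ × List X // Good T A s}) (n : ℕ) :
    Cert T R σ yu (sta hY T R hT' hTn σ hyu A s₀ n).1
      (sta hY T R hT' hTn σ hyu A s₀ (n+1)).1 :=
  (step_ex hY T R hT' hTn σ hyu A (sta hY T R hT' hTn σ hyu A s₀ n).1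
    (sta hY T R hT' hTn σ hyu A s₀ n).2).choose_spec.2

/-- Any point of the convex hull of the range of `v` is approximated by
uniform averages (with repetitions) of values of `v`. -/
lemma hull_approx (v : ℕ → Y) {p : Y} (hp : p ∈ convexHull ℝ (Set.range v))
    {e : ℝ} (he : 0 < e) :
    ∃ l : List ℕ, l ≠ [] ∧ ‖p - (l.length : ℝ)⁻¹ • (l.map v).sum‖ ≤ e := by
  classical
  rw [convexHull_eq] at hp
  obtain ⟨ι, t, w, z, hw0, hw1, hz, hcm⟩ := hp
  have ht : t.Nonempty := Finset.nonempty_of_sum_ne_zero (by rw [hw1]; norm_num)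
  obtain ⟨i₀, hi₀⟩ := ht
  have hps : p = ∑ i ∈ t, w i • z i := by
    rw [← hcm, Finset.centerMass_eq_of_sum_1 t z hw1]
  -- choose preimages
  set idx : ι → ℕ := fun i => if h : ∃ n, v n = z i then h.choose else 0 with hidxdef
  have hidx : ∀ i ∈ t, v (idx i) = z i := by
    intro i hi
    obtain ⟨n, hn⟩ := hz i hi
    rw [hidxdef]
    simp only []
    rw [dif_pos ⟨n, hn⟩]
    exact (Exists.choose_spec (⟨n, hn⟩ : ∃ m, v m = z i))
  set B : ℝ := ∑ i ∈ t, (‖z i‖ + 1) with hB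
  have hB1 : (1:ℝ) ≤ B := by
    calc (1:ℝ) ≤ ‖z i₀‖ + 1 := by linarith [norm_nonneg (z i₀)]
      _ ≤ B := Finset.single_le_sum (f := fun i => ‖z i‖ + 1)
          (fun i _ => by positivity) hi₀
  have hzB : ∀ i ∈ t, ‖z i‖ ≤ B := by
    intro i hi
    calc ‖z i‖ ≤ ‖z i‖ + 1 := by linarith
      _ ≤ B := Finset.single_le_sum (f := fun i => ‖z i‖ + 1)
          (fun i _ => by positivity) hi
  have hcard : (t.card : ℝ) ≤ B := by
    rw [hB, Finset.card_eq_sum_ones]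
    push_cast
    exact Finset.sum_le_sum (fun i _ => by linarith [norm_nonneg (z i)])
  obtain ⟨N, hN⟩ := exists_nat_gt (B * (1 + B) / e)
  have hNpos : 0 < (N:ℝ) := lt_of_le_of_lt (by positivity) hN
  have hNnat : 0 < N := by exact_mod_cast hNpos
  set k : ι → ℕ := fun i => ⌊w i * N⌋₊ with hk
  have hkle : ∀ i ∈ t, (k i : ℝ) ≤ w i * N := fun i hi =>
    Nat.floor_le (by have := hw0 i hi; positivity)
  have hklt : ∀ i ∈ t, w i * N < (k i : ℝ) + 1 := fun i hi => Nat.lt_floor_add_one _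
  set N' : ℕ := ∑ i ∈ t, k i with hN'
  have hN'le : (N' : ℝ) ≤ N := by
    rw [hN']
    push_cast
    calc ∑ i ∈ t, (k i : ℝ) ≤ ∑ i ∈ t, w i * N := Finset.sum_le_sum hkle
      _ = (∑ i ∈ t, w i) * N := by rw [Finset.sum_mul]
      _ = N := by rw [hw1, one_mul]
  have hN'leN : N' ≤ N := by exact_mod_cast hN'le
  set l : List ℕ := (t.toList.flatMap fun i => List.replicate (k i) (idx i)) ++
      List.replicate (N - N') (idx i₀) with hl
  have hlen : l.length = N := by
    rw [hl, List.length_append, List.length_flatMap, List.length_replicate]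
    have : List.map (List.length ∘ fun i => List.replicate (k i) (idx i)) t.toList
        = List.map k t.toList := by
      apply List.map_congr_left
      intro i _
      simp [List.length_replicate]
    rw [show List.map (fun a => (List.replicate (k a) (idx a)).length) t.toList = List.map k t.toList from this, Finset.sum_map_toList]
    have h' : t.sum k = N' := rfl
    omega
  have hsum : (l.map v).sum = (∑ i ∈ t, (k i : ℝ) • z i) + ((N - N' : ℕ) : ℝ) • z i₀ := by
    rw [hl, List.map_append, List.sum_append]
    congr 1
    · rw [List.map_flatMap]
      rw [List.flatMap_def, List.sum_flatten, List.map_map]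
      have : (List.sum ∘ fun i => List.map v (List.replicate (k i) (idx i))) =
          fun i => (k i : ℝ) • v (idx i) := by
        funext i
        simp only [Function.comp, List.map_replicate, List.sum_replicate]
        rw [← Nat.cast_smul_eq_nsmul ℝ]
      rw [this, Finset.sum_map_toList]
      exact Finset.sum_congr rfl (fun i hi => by rw [hidx i hi])
    · rw [List.map_replicate, List.sum_replicate, ← Nat.cast_smul_eq_nsmul ℝ, hidx i₀ hi₀]
  refine ⟨l, ?_, ?_⟩
  · intro h0
    rw [h0] at hlen
    simp at hlen
    omega
  · rw [hlen, hsum]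
    have e2 : (N:ℝ)⁻¹ • (((N - N' : ℕ) : ℝ) • z i₀) = (((N - N' : ℕ) : ℝ)/N) • z i₀ := by
      rw [smul_smul]
      congr 1
      field_simp
    have e1 : ∀ i ∈ t, (w i - (k i : ℝ)/N) • z i
        = w i • z i - (N:ℝ)⁻¹ • ((k i : ℝ) • z i) := by
      intro i _
      rw [smul_smul, sub_smul]
      congr 2
      field_simp
    have hsplit : p - (N:ℝ)⁻¹ • ((∑ i ∈ t, (k i : ℝ) • z i) + ((N - N' : ℕ) : ℝ) • z i₀)
        = (∑ i ∈ t, (w i - (k i : ℝ)/N) • z i) - (((N - N' : ℕ) : ℝ)/N) • z i₀ := by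
      rw [hps, smul_add, Finset.smul_sum, e2,
        show (∑ i ∈ t, (w i - (k i : ℝ)/N) • z i)
          = ∑ i ∈ t, (w i • z i - (N:ℝ)⁻¹ • ((k i : ℝ) • z i)) from Finset.sum_congr rfl e1,
        Finset.sum_sub_distrib]
      abel
    rw [hsplit]
    have hterm : ∀ i ∈ t, ‖(w i - (k i : ℝ)/N) • z i‖ ≤ (1/N) * ‖z i‖ := by
      intro i hi
      rw [norm_smul, Real.norm_eq_abs]
      have h1 : 0 ≤ w i - (k i : ℝ)/N := by
        have := hkle i hi
        rw [sub_nonneg, div_le_iff₀ hNpos]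
        linarith
      have h2 : w i - (k i : ℝ)/N ≤ 1/N := by
        have := hklt i hi
        rw [sub_le_iff_le_add, ← add_div, le_div_iff₀ hNpos]
        linarith
      rw [abs_of_nonneg h1]
      exact mul_le_mul_of_nonneg_right h2 (norm_nonneg _)
    have hsub : ((N - N' : ℕ) : ℝ) ≤ t.card := by
      rw [Nat.cast_sub hN'leN]
      have hx1 : (N' : ℝ) = ∑ i ∈ t, (k i : ℝ) := by rw [hN']; push_cast; ring
      have hNr : (N : ℝ) = ∑ i ∈ t, w i * N := by
        rw [← Finset.sum_mul, hw1, one_mul]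
      rw [hNr, hx1, ← Finset.sum_sub_distrib]
      calc ∑ i ∈ t, (w i * N - (k i:ℝ)) ≤ ∑ i ∈ t, (1:ℝ) :=
          Finset.sum_le_sum (fun i hi => by linarith [hklt i hi])
        _ = t.card := by simp
    calc ‖(∑ i ∈ t, (w i - (k i : ℝ)/N) • z i) - (((N - N' : ℕ) : ℝ)/N) • z i₀‖
        ≤ ‖∑ i ∈ t, (w i - (k i : ℝ)/N) • z i‖ + ‖(((N - N' : ℕ) : ℝ)/N) • z i₀‖ :=
          norm_sub_le _ _
      _ ≤ (∑ i ∈ t, (1/N) * ‖z i‖) + (((N - N' : ℕ) : ℝ)/N) * ‖z i₀‖ := by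
          gcongr
          · calc ‖∑ i ∈ t, (w i - (k i : ℝ)/N) • z i‖
                ≤ ∑ i ∈ t, ‖(w i - (k i : ℝ)/N) • z i‖ := norm_sum_le _ _
              _ ≤ ∑ i ∈ t, (1/N) * ‖z i‖ := Finset.sum_le_sum hterm
          · rw [norm_smul, Real.norm_eq_abs, abs_of_nonneg (by positivity)]
      _ ≤ (1/N) * B + ((t.card : ℝ)/N) * B := by
          have ha : ∑ i ∈ t, (1/N : ℝ) * ‖z i‖ ≤ (1/N) * B := by
            rw [← Finset.mul_sum]
            refine mul_le_mul_of_nonneg_left ?_ (by positivity)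
            rw [hB]
            exact Finset.sum_le_sum (fun i _ => by linarith [norm_nonneg (z i)])
          have hb : (((N - N' : ℕ) : ℝ)/N) * ‖z i₀‖ ≤ ((t.card : ℝ)/N) * B := by
            have h1 : ((N - N' : ℕ) : ℝ)/N ≤ (t.card : ℝ)/N :=
              (div_le_div_iff_of_pos_right hNpos).mpr hsub
            exact mul_le_mul h1 (hzB i₀ hi₀) (norm_nonneg _) (by positivity)
          linarith
      _ ≤ e := by
          have hNe : B * (1 + B) < (N:ℝ) * e := by
            rw [div_lt_iff₀ he] at hN
            linarith
          have h1 : (1/(N:ℝ)) * B + ((t.card : ℝ)/N) * B = (B + (t.card:ℝ)*B)/N := by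
            field_simp
          have h2 : (B + (t.card:ℝ)*B)/N ≤ (B*(1+B))/N := by
            apply (div_le_div_iff_of_pos_right hNpos).mpr
            have hBnn : (0:ℝ) ≤ B := le_trans zero_le_one hB1
            have := mul_le_mul_of_nonneg_right hcard hBnn
            calc B + (t.card:ℝ)*B ≤ B + B*B := by linarith
              _ = B*(1+B) := by ring
          have h3 : (B*(1+B))/N < e := by
            rw [div_lt_iff₀ hNpos]
            calc B*(1+B) < (N:ℝ)*e := hNe
              _ = e*N := mul_comm _ _
          linarith

lemma le_foldr_max (l : List ℕ) : ∀ i ∈ l, i ≤ l.foldr max 0 := by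
  induction l with
  | nil => simp
  | cons a l ih =>
    intro i hi
    rcases List.mem_cons.mp hi with rfl | hi
    · exact le_max_left _ _
    · exact le_trans (ih i hi) (le_max_right _ _)

end Machine

end DgAux

set_option maxHeartbeats 1000000 in
/-- if `Y` has the Daugavet property, `T'` is an isometry onto its
range, and `R` is a norm-one weakly compact operator that is slice continuous
with respect to `T`, then `‖T + R‖ = 2`. -/
theorem daugavet_eq_of_weakly_compact_slice_continuous
    {X Y : Type*} [NormedAddCommGroup X] [NormedSpace ℝ X] [CompleteSpace X]
    [NormedAddCommGroup Y] [NormedSpace ℝ Y] [CompleteSpace Y]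
    (hY : DaugavetProperty Y)
    (T : X →L[ℝ] Y) (hT' : ∀ y' : Y →L[ℝ] ℝ, ‖y'.comp T‖ = ‖y'‖)
    (R : X →L[ℝ] Y) (hR : ‖R‖ = 1)
    (hwc : WeaklyCompactOperator R)
    (hsc : ∀ S ∈ opSlices R, ∃ S₁ ∈ opSlices T, S₁ ⊆ S) :
    ‖T + R‖ = 2 := by

  classical
  have hwc' : IsCompact (closure ((⇑R '' {x | ‖x‖ ≤ 1}) : Set (WeakSpace ℝ Y))) := hwc
  have hTn : ∀ x, ‖T x‖ ≤ ‖x‖ := by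
    intro x
    rcases eq_or_ne (T x) 0 with h0 | h0
    · rw [h0, norm_zero]; exact norm_nonneg x
    · obtain ⟨g, hg1, hg2⟩ := DgAux.dual_vector' h0
      calc ‖T x‖ = g (T x) := hg2.symm
        _ = (g.comp T) x := rfl
        _ ≤ |(g.comp T) x| := le_abs_self _
        _ ≤ ‖g.comp T‖ * ‖x‖ := by
            have := (g.comp T).le_opNorm x
            rwa [Real.norm_eq_abs] at this
        _ = ‖x‖ := by rw [hT' g, hg1, one_mul]
  have hupper : ‖T + R‖ ≤ 2 := by
    have h1 : ‖T‖ ≤ 1 := T.opNorm_le_bound zero_le_one (fun x => by rw [one_mul]; exact hTn x)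
    calc ‖T + R‖ ≤ ‖T‖ + ‖R‖ := norm_add_le _ _
      _ ≤ 2 := by rw [hR]; linarith
  have key : ∀ ε : ℝ, 0 < ε → ε < 1 → 2 - ε ≤ ‖T + R‖ := by
    intro ε hε0 hε1
    set e8 : ℝ := ε/8 with he8
    have he80 : 0 < e8 := by positivity
    have he81 : e8 < 1 := by rw [he8]; linarith
    have he8b : e8 ≤ 1/8 := by rw [he8]; linarith
    obtain ⟨xb, hxb1, hxb2⟩ := DgAux.exists_unit_norm_lt R (c := 1 - e8)
      (by linarith) (by rw [hR]; linarith)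
    have hRxb : R xb ≠ 0 := by
      intro h; rw [h, norm_zero] at hxb2; linarith
    obtain ⟨g₀, hg₀1, hg₀2⟩ := DgAux.dual_vector' hRxb
    set yu : Y := ‖R xb‖⁻¹ • R xb with hyu_def
    have hyu : ‖yu‖ = 1 := norm_smul_inv_norm hRxb
    have hg₀R : 1 - e8 ≤ ‖g₀.comp R‖ := by
      calc 1 - e8 ≤ ‖R xb‖ := le_of_lt hxb2
        _ = (g₀.comp R) xb := hg₀2.symm
        _ ≤ |(g₀.comp R) xb| := le_abs_self _
        _ ≤ ‖g₀.comp R‖ * ‖xb‖ := by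
            have := (g₀.comp R).le_opNorm xb
            rwa [Real.norm_eq_abs] at this
        _ ≤ ‖g₀.comp R‖ := by
            rcases le_or_gt ‖xb‖ 1 with h | h
            · nlinarith [norm_nonneg (g₀.comp R)]
            · linarith
    have hg₀Rne : g₀.comp R ≠ 0 := by
      intro h; rw [h, norm_zero] at hg₀R; linarith
    set S0 : Set X := {x | ‖x‖ ≤ 1 ∧ (1 - e8) * ‖g₀.comp R‖ ≤ (g₀.comp R) x} with hS0def
    have hS0mem : S0 ∈ opSlices R := ⟨g₀, e8, he80, he81, hg₀Rne, rfl⟩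
    obtain ⟨S1, hS1mem, hS1sub⟩ := hsc S0 hS0mem
    obtain ⟨u, ε₁, hε₁0, hε₁1, huT, hS1eq⟩ := hS1mem
    have hune : u ≠ 0 := by
      intro h; rw [h] at huT; simp at huT
    set F0 : Y →L[ℝ] ℝ := ‖u‖⁻¹ • u with hF0def
    have hF0n : ‖F0‖ = 1 := norm_smul_inv_norm hune
    set δ0 : ℝ := min ε₁ e8 with hδ0def
    have hδ00 : 0 < δ0 := lt_min hε₁0 he80
    have hδ01 : δ0 ≤ 1 := le_trans (min_le_right _ _) (le_of_lt he81)
    obtain ⟨σ, hσ⟩ := exists_surjective_nat (List ℕ)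
    have hGood0 : DgAux.Good T S0 (F0, δ0, ([] : List X)) := by
      refine ⟨hF0n, hδ00, hδ01, ?_⟩
      rintro x ⟨hx1, hx2⟩
      apply hS1sub
      rw [hS1eq]
      refine ⟨hx1, ?_⟩
      have hcompn : ‖u.comp T‖ = ‖u‖ := hT' u
      have hu_pos : 0 < ‖u‖ := norm_pos_iff.mpr hune
      have hF0x : 1 - δ0 ≤ ‖u‖⁻¹ * u (T x) := hx2
      have hux : (1 - δ0) * ‖u‖ ≤ u (T x) := by
        have h2 := mul_le_mul_of_nonneg_left hF0x (le_of_lt hu_pos)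
        calc (1 - δ0) * ‖u‖ = ‖u‖ * (1 - δ0) := mul_comm _ _
          _ ≤ ‖u‖ * (‖u‖⁻¹ * u (T x)) := h2
          _ = u (T x) := by field_simp
      calc (1 - ε₁) * ‖u.comp T‖ ≤ (1 - δ0) * ‖u.comp T‖ := by
            refine mul_le_mul_of_nonneg_right ?_ (norm_nonneg _)
            have := min_le_left ε₁ e8
            rw [hδ0def]
            linarith
        _ = (1 - δ0) * ‖u‖ := by rw [hcompn]
        _ ≤ u (T x) := hux
    -- the iterative chain of slices
    set st := DgAux.sta hY T R hT' hTn σ hyu S0 ⟨(F0, δ0, []), hGood0⟩ with hstdef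
    have cert : ∀ n, DgAux.Cert T R σ yu (st n).1 (st (n+1)).1 :=
      fun n => DgAux.sta_cert hY T R hT' hTn σ hyu S0 _ n
    set xf : ℕ → X := fun n => DgAux.pickx T (st n).1.1 (st n).1.2.1 with hxfdef
    have hxfmem : ∀ n, xf n ∈ DgAux.Pull T (st n).1.1 (st n).1.2.1 := fun n =>
      DgAux.pickx_mem T hT' (st n).2.1 (st n).2.2.1 (st n).2.2.2.1
    have hxfS0 : ∀ n, xf n ∈ S0 := fun n => (st n).2.2.2.2 (hxfmem n)
    have hxfB : ∀ n, ‖xf n‖ ≤ 1 := fun n => (hxfS0 n).1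
    have hlen : ∀ n, (st n).1.2.2.length = n := by
      intro n
      induction n with
      | zero => rfl
      | succ n ih =>
        rw [(cert n).2.2.1, List.length_append, ih]
        rfl
    have hget : ∀ n, ∀ k < n, (st n).1.2.2.getD k 0 = xf k := by
      intro n
      induction n with
      | zero => intro k hk; omega
      | succ n ih =>
        intro k hk
        rw [(cert n).2.2.1]
        rcases Nat.lt_or_ge k n with h | h
        · rw [List.getD_append _ _ _ _ (by rw [hlen n]; exact h)]
          exact ih k h
        · have hkn : k = n := by omega
          subst hkn
          have h1 : ((st k).1.2.2 ++ [DgAux.pickx T (st k).1.1 (st k).1.2.1]).getD k 0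
              = DgAux.pickx T (st k).1.1 (st k).1.2.1 := by
            have h2 := List.getElem?_concat_length (l := (st k).1.2.2) (a := DgAux.pickx T (st k).1.1 (st k).1.2.1)
            rw [hlen k] at h2
            rw [List.getD_eq_getElem?_getD, h2]
            rfl
          rw [h1]
    have hchain : ∀ m n, m ≤ n → ∀ y, y ∈ DgAux.Sl (st n).1.1 (st n).1.2.1 →
        y ∈ DgAux.Sl (st m).1.1 (st m).1.2.1 := by
      intro m n h
      induction n, h using Nat.le_induction with
      | base => exact fun y hy => hy
      | succ n hmn ih => exact fun y hy => ih y ((cert n).1 y hy)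
    have hδle : ∀ n, (st n).1.2.1 ≤ δ0 := by
      intro n
      induction n with
      | zero => exact le_refl _
      | succ n ih => exact le_trans (cert n).2.1 ih
    -- weak cluster point of (R (xf n))
    set Rseq : ℕ → WeakSpace ℝ Y := fun n => (R (xf n) : Y) with hRseqdef
    have hmemK : ∀ n, Rseq n ∈ closure ((⇑R '' {x | ‖x‖ ≤ 1}) : Set (WeakSpace ℝ Y)) :=
      fun n => subset_closure ⟨xf n, hxfB n, rfl⟩
    have hle : Filter.map Rseq Filter.atTop ≤
        Filter.principal (closure ((⇑R '' {x | ‖x‖ ≤ 1}) : Set (WeakSpace ℝ Y))) := by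
      rw [Filter.le_principal_iff, Filter.mem_map]
      exact Filter.univ_mem' hmemK
    obtain ⟨yh, hyhK, hyhcl⟩ := IsCompact.exists_clusterPt hwc' hle
    have hyhrange : yh ∈ closure (Set.range Rseq) :=
      mem_closure_iff_clusterPt.mpr
        (hyhcl.mono (Filter.le_principal_iff.mpr Filter.range_mem_map))
    have hyhg₀ : (1 - e8) * ‖g₀.comp R‖ ≤ g₀ yh := by
      have hcont : Continuous fun z : WeakSpace ℝ Y => g₀ z :=
        WeakBilin.eval_continuous _ g₀
      have hclosed : IsClosed {z : WeakSpace ℝ Y | (1 - e8) * ‖g₀.comp R‖ ≤ g₀ z} :=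
        IsClosed.preimage hcont isClosed_Ici
      have hsubr : Set.range Rseq ⊆ {z : WeakSpace ℝ Y | (1 - e8) * ‖g₀.comp R‖ ≤ g₀ z} := by
        rintro _ ⟨n, rfl⟩
        exact (hxfS0 n).2
      exact closure_minimal hsubr hclosed hyhrange
    set yY : Y := yh with hyYdef
    have hyYnorm : 1 - 2*e8 ≤ ‖yY‖ := by
      have h1 : g₀ yY ≤ ‖yY‖ := by
        calc g₀ yY ≤ |g₀ yY| := le_abs_self _
          _ ≤ ‖g₀‖ * ‖yY‖ := by
              have := g₀.le_opNorm yY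
              rwa [Real.norm_eq_abs] at this
          _ = ‖yY‖ := by rw [hg₀1, one_mul]
      have h2 : (1 - e8) * (1 - e8) ≤ (1 - e8) * ‖g₀.comp R‖ :=
        mul_le_mul_of_nonneg_left hg₀R (by linarith)
      nlinarith [hyhg₀]
    -- yh belongs to the norm closure of the convex hull of the R (xf n)
    set Cl : Set Y := closure (convexHull ℝ (Set.range (fun n => R (xf n)))) with hCldef
    have hyhC : yY ∈ Cl := by
      by_contra hnot
      obtain ⟨f, c, hfc1, hfc2⟩ := geometric_hahn_banach_point_closed
        ((convex_convexHull ℝ _).closure) isClosed_closure hnot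
      have hcont : Continuous fun z : WeakSpace ℝ Y => f z :=
        WeakBilin.eval_continuous _ f
      have hopen : IsOpen {z : WeakSpace ℝ Y | f z < c} :=
        IsOpen.preimage hcont isOpen_Iio
      have hmem : {z : WeakSpace ℝ Y | f z < c} ∈ nhds yh := hopen.mem_nhds hfc1
      obtain ⟨z, hz1, hz2⟩ := (clusterPt_iff_nonempty.mp hyhcl) hmem Filter.range_mem_map
      obtain ⟨n, rfl⟩ := hz2
      have hz3 : c < f (Rseq n) :=
        hfc2 _ (subset_closure (subset_convexHull ℝ _ ⟨n, rfl⟩))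
      have hz4 : f (Rseq n) < c := hz1
      linarith
    obtain ⟨p, hp1, hp2⟩ := Metric.mem_closure_iff.mp hyhC (e8/2) (by positivity)
    obtain ⟨l, hl1, hl2⟩ := DgAux.hull_approx (fun n => R (xf n)) hp1 (by positivity : (0:ℝ) < e8/2)
    set wv : Y := (l.length : ℝ)⁻¹ • (l.map (fun n => R (xf n))).sum with hwvdef
    have hyw : ‖yY - wv‖ ≤ e8 := by
      have hd : dist yY p < e8/2 := hp2
      rw [dist_eq_norm] at hd
      calc ‖yY - wv‖ = ‖(yY - p) + (p - wv)‖ := by congr 1; abel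
        _ ≤ ‖yY - p‖ + ‖p - wv‖ := norm_add_le _ _
        _ ≤ e8 := by linarith [hl2]
    -- the stage at which the approximating combination was handled
    obtain ⟨j, hj⟩ := hσ l
    set mB : ℕ := (l.foldr max 0) + 1 with hmBdef
    set m : ℕ := Nat.pair mB j with hmdef
    have hm2 : (Nat.unpair m).2 = j := by rw [hmdef, Nat.unpair_pair]
    have hmgt : ∀ i ∈ l, i < m := by
      intro i hi
      have h1 : i ≤ l.foldr max 0 := DgAux.le_foldr_max l i hi
      have h2 : mB ≤ m := Nat.left_le_pair mB j
      omega
    have htgt : DgAux.tgt R σ yu (st m).1 = wv := by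
      rw [DgAux.tgt]
      rw [hlen m, hm2, hj]
      rw [if_pos ⟨hl1, hmgt⟩]
      rw [DgAux.avg, hwvdef]
      congr 2
      apply List.map_congr_left
      intro i hi
      rw [hget m i (hmgt i hi)]
    have hwv0 : wv ≠ 0 := by
      intro h0
      rw [h0, sub_zero] at hyw
      linarith [hyYnorm]
    have hwvnorm : 1 - 3*e8 ≤ ‖wv‖ := by
      have := norm_sub_norm_le yY wv
      linarith [hyYnorm, hyw]
    obtain ⟨G, hG1, hGp, hGsl⟩ := (cert m).2.2.2
    have hδm : (st m).1.2.1 ≤ e8 := le_trans (hδle m) (min_le_right _ _)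
    have hδm0 : 0 < (st m).1.2.1 := (st m).2.2.1
    have hGw : (1 - e8) * (1 - 3*e8) ≤ G wv := by
      have hpv : DgAux.pvec R σ yu (st m).1 = ‖wv‖⁻¹ • wv := by
        rw [DgAux.pvec, htgt, if_neg hwv0]
      rw [hpv] at hGp
      have h1 : G (‖wv‖⁻¹ • wv) = ‖wv‖⁻¹ * G wv := by rw [map_smul]; rfl
      rw [h1] at hGp
      have hwpos : (0:ℝ) < ‖wv‖ := norm_pos_iff.mpr hwv0
      have h2 : (1 - (st m).1.2.1) * ‖wv‖ ≤ G wv := by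
        have h3 := mul_le_mul_of_nonneg_left hGp (le_of_lt hwpos)
        calc (1 - (st m).1.2.1) * ‖wv‖ = ‖wv‖ * (1 - (st m).1.2.1) := mul_comm _ _
          _ ≤ ‖wv‖ * (‖wv‖⁻¹ * G wv) := h3
          _ = G wv := by field_simp
      calc (1 - e8) * (1 - 3*e8) ≤ (1 - (st m).1.2.1) * ‖wv‖ :=
            mul_le_mul (by linarith) hwvnorm (by linarith) (by linarith)
        _ ≤ G wv := h2
    have hGyY : 1 - 5*e8 ≤ G yY := by
      have h1 : G yY = G wv + G (yY - wv) := by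
        rw [← map_add]
        congr 1
        abel
      have h2 : |G (yY - wv)| ≤ ‖yY - wv‖ := by
        have := G.le_opNorm (yY - wv)
        rw [hG1, one_mul] at this
        rwa [Real.norm_eq_abs] at this
      have h3 : -(e8) ≤ G (yY - wv) := (abs_le.mp (le_trans h2 hyw)).1
      nlinarith [he80]
    -- pick a later point of the sequence weakly close to the cluster point
    have hcontG : Continuous fun z : WeakSpace ℝ Y => G z :=
      WeakBilin.eval_continuous _ G
    have hopenG : IsOpen {z : WeakSpace ℝ Y | G yh - e8 < G z} :=
      IsOpen.preimage hcontG isOpen_Ioi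
    have hmemG : {z : WeakSpace ℝ Y | G yh - e8 < G z} ∈ nhds yh :=
      hopenG.mem_nhds (by show G yh - e8 < G yh; linarith)
    have htail : {z : WeakSpace ℝ Y | ∃ n, m + 1 ≤ n ∧ Rseq n = z} ∈
        Filter.map Rseq Filter.atTop := by
      rw [Filter.mem_map]
      filter_upwards [Filter.mem_atTop (m+1)] with n hn
      exact ⟨n, hn, rfl⟩
    obtain ⟨z, hz1, n, hn1, rfl⟩ := (clusterPt_iff_nonempty.mp hyhcl) hmemG htail
    -- the final vector
    have hTx : T (xf n) ∈ DgAux.Sl (st (m+1)).1.1 (st (m+1)).1.2.1 := by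
      have hx := hxfmem n
      have hTxb : ‖T (xf n)‖ ≤ 1 := le_trans (hTn _) (hxfB n)
      exact hchain (m+1) n hn1 _ ⟨hTxb, hx.2⟩
    have hGT : 1 - e8 ≤ G (T (xf n)) := by
      have := hGsl _ hTx
      linarith
    have hGR : 1 - 6*e8 ≤ G (R (xf n)) := by
      have h1 : G yh - e8 < G (Rseq n) := hz1
      have h2 : G (Rseq n) = G (R (xf n)) := rfl
      linarith [hGyY]
    have hfin : 2 - ε ≤ ‖(T + R) (xf n)‖ := by
      have h1 : G (T (xf n)) + G (R (xf n)) = G ((T + R) (xf n)) := by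
        rw [ContinuousLinearMap.add_apply, map_add]
      have h2 : G ((T + R) (xf n)) ≤ ‖(T + R) (xf n)‖ := by
        calc G ((T + R) (xf n)) ≤ |G ((T + R) (xf n))| := le_abs_self _
          _ ≤ ‖G‖ * ‖(T + R) (xf n)‖ := by
              have := G.le_opNorm ((T + R) (xf n))
              rwa [Real.norm_eq_abs] at this
          _ = ‖(T + R) (xf n)‖ := by rw [hG1, one_mul]
      have h3 : 2 - ε ≤ G (T (xf n)) + G (R (xf n)) := by
        rw [he8] at hGT hGR
        linarith
      linarith
    calc 2 - ε ≤ ‖(T + R) (xf n)‖ := hfin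
      _ ≤ ‖T + R‖ * ‖xf n‖ := (T + R).le_opNorm _
      _ ≤ ‖T + R‖ := by
          have := hxfB n
          nlinarith [norm_nonneg (T + R), norm_nonneg (xf n)]
  refine le_antisymm hupper ?_
  by_contra hlt
  push_neg at hlt
  set ε : ℝ := min ((2 - ‖T + R‖)/2) (1/2) with hεdef
  have hε0 : 0 < ε := lt_min (by linarith) (by norm_num)
  have hε1 : ε < 1 := lt_of_le_of_lt (min_le_right _ _) (by norm_num)
  have h2 := key ε hε0 hε1
  have h3 : ε ≤ (2 - ‖T + R‖)/2 := min_le_left _ _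
  linarith
end
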